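/- arXiv:2505.19991 — 4 statements merged into one kernel-verified Lean document; each statement's English description precedes it below -/
import Mathlib

section
/- The infinite product (−q;q)∞²/(q;q)∞ equals the product over n ≥ 1 of (1 + qⁿ)^(3 + ν₂(n)), where ν₂(n) is the 2-adic valuation of n. -/
open PowerSeries Finset

/-- The power series `∏_{k=0}^∞ g k`, defined coefficientwise via stabilized
finite partial products (valid when `g k ≡ 1` modulo degree `> k`). -/
noncomputable def iProd (g : ℕ → PowerSeries ℤ) : PowerSeries ℤ :=
  PowerSeries.mk fun n => PowerSeries.coeff n (∏ k ∈ Finset.range (n + 1), g k)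

/-- `(q^j; q^j)_∞ = ∏_{k≥1} (1 - q^{jk})` as a formal power series. -/
noncomputable def F (j : ℕ) : PowerSeries ℤ :=
  iProd fun k => 1 - (PowerSeries.X : PowerSeries ℤ) ^ (j * (k + 1))

/-- `(-q; q)_∞ = ∏_{k≥1} (1 + q^k)` as a formal power series. -/
noncomputable def Fneg : PowerSeries ℤ :=
  iProd fun k => 1 + (PowerSeries.X : PowerSeries ℤ) ^ (k + 1)

/-- Multiplicative inverse of a power series with constant coefficient `1`. -/
noncomputable def psInv (f : PowerSeries ℤ) : PowerSeries ℤ := PowerSeries.invOfUnit f 1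

/-! ### Auxiliary infrastructure -/

lemma coeff_iProd' (g : ℕ → PowerSeries ℤ) (n : ℕ) :
    PowerSeries.coeff n (iProd g) = PowerSeries.coeff n (∏ k ∈ Finset.range (n + 1), g k) :=
  PowerSeries.coeff_mk n _

lemma dvd_sub_one_mul {m : ℕ} {a b : PowerSeries ℤ}
    (ha : (X : PowerSeries ℤ)^m ∣ a - 1) (hb : (X : PowerSeries ℤ)^m ∣ b - 1) :
    (X : PowerSeries ℤ)^m ∣ a * b - 1 := by
  have h : a * b - 1 = a * (b - 1) + (a - 1) := by ring
  rw [h]; exact dvd_add (Dvd.dvd.mul_left hb a) ha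

lemma dvd_sub_one_pow {m : ℕ} {a : PowerSeries ℤ} (ha : (X:PowerSeries ℤ)^m ∣ a - 1) :
    ∀ e : ℕ, (X:PowerSeries ℤ)^m ∣ a ^ e - 1
  | 0 => by simp
  | e+1 => by rw [pow_succ]; exact dvd_sub_one_mul (dvd_sub_one_pow ha e) ha

/-- Stability of coefficients of partial products. -/
lemma coeff_prod_stable (g : ℕ → PowerSeries ℤ) (n : ℕ) :
    ∀ m₂ m₁ : ℕ, m₁ ≤ m₂ →
    (∀ k, m₁ ≤ k → k < m₂ → (X:PowerSeries ℤ)^(n+1) ∣ g k - 1) →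
    PowerSeries.coeff n (∏ k ∈ Finset.range m₂, g k) =
      PowerSeries.coeff n (∏ k ∈ Finset.range m₁, g k)
  | 0, m₁, h, _ => by rw [Nat.le_zero.mp h]
  | m+1, m₁, h, hg => by
    rcases Nat.lt_or_ge m₁ (m+1) with hlt | hge
    · have hm : m₁ ≤ m := Nat.lt_succ_iff.mp hlt
      rw [Finset.prod_range_succ]
      have hgm : (X:PowerSeries ℤ)^(n+1) ∣ g m - 1 := hg m hm (Nat.lt_succ_self m)
      have h2 : (∏ k ∈ Finset.range m, g k) * g m
          = (∏ k ∈ Finset.range m, g k) + (∏ k ∈ Finset.range m, g k) * (g m - 1) := by ring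
      rw [h2, map_add]
      have hz : PowerSeries.coeff n ((∏ k ∈ Finset.range m, g k) * (g m - 1)) = 0 := by
        have hd : (X:PowerSeries ℤ)^(n+1) ∣ (∏ k ∈ Finset.range m, g k) * (g m - 1) :=
          Dvd.dvd.mul_left hgm _
        exact (PowerSeries.X_pow_dvd_iff.mp hd) n (Nat.lt_succ_self n)
      rw [hz, add_zero]
      exact coeff_prod_stable g n m m₁ hm (fun k hk1 hk2 => hg k hk1 (Nat.lt_succ_of_lt hk2))
    · have h3 : m₁ = m + 1 := le_antisymm h hge
      rw [h3]

def Good (g : ℕ → PowerSeries ℤ) : Prop := ∀ k, (X:PowerSeries ℤ)^(k+1) ∣ g k - 1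

lemma coeff_iProd (g : ℕ → PowerSeries ℤ) (hg : Good g) (n m : ℕ) (hm : n + 1 ≤ m) :
    PowerSeries.coeff n (iProd g) = PowerSeries.coeff n (∏ k ∈ Finset.range m, g k) := by
  rw [coeff_iProd']
  refine (coeff_prod_stable g n m (n+1) hm fun k hk _ => ?_).symm
  exact dvd_trans (pow_dvd_pow _ (by omega)) (hg k)

lemma iProd_mul {g h : ℕ → PowerSeries ℤ} (hg : Good g) (hh : Good h) :
    iProd (fun k => g k * h k) = iProd g * iProd h := by
  ext n
  rw [coeff_iProd', Finset.prod_mul_distrib, PowerSeries.coeff_mul, PowerSeries.coeff_mul]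
  refine Finset.sum_congr rfl fun p hp => ?_
  rw [Finset.HasAntidiagonal.mem_antidiagonal] at hp
  rw [coeff_iProd g hg p.1 (n+1) (by omega), coeff_iProd h hh p.2 (n+1) (by omega)]

/-! ### The substitution `q ↦ q²` -/

noncomputable def sqr (f : PowerSeries ℤ) : PowerSeries ℤ :=
  PowerSeries.mk fun n => if 2 ∣ n then PowerSeries.coeff (n / 2) f else 0

lemma coeff_sqr (f : PowerSeries ℤ) (n : ℕ) :
    PowerSeries.coeff n (sqr f) = if 2 ∣ n then PowerSeries.coeff (n / 2) f else 0 :=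
  PowerSeries.coeff_mk n _

lemma coeff_sqr_two_mul (f : PowerSeries ℤ) (m : ℕ) :
    PowerSeries.coeff (2 * m) (sqr f) = PowerSeries.coeff m f := by
  rw [coeff_sqr, if_pos ⟨m, rfl⟩, Nat.mul_div_cancel_left _ two_pos]

lemma sqr_one : sqr 1 = 1 := by
  ext n
  simp only [coeff_sqr, PowerSeries.coeff_one]
  split_ifs <;> omega

lemma sqr_sub (f g : PowerSeries ℤ) : sqr (f - g) = sqr f - sqr g := by
  ext n; rw [map_sub, coeff_sqr, coeff_sqr, coeff_sqr]
  split <;> simp [map_sub]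

lemma sqr_add (f g : PowerSeries ℤ) : sqr (f + g) = sqr f + sqr g := by
  ext n; rw [map_add, coeff_sqr, coeff_sqr, coeff_sqr]
  split <;> simp [map_add]

lemma sqr_mul (f g : PowerSeries ℤ) : sqr (f * g) = sqr f * sqr g := by
  ext n
  rw [PowerSeries.coeff_mul, coeff_sqr]
  rcases em (2 ∣ n) with h2 | h2
  · obtain ⟨m, rfl⟩ := h2
    rw [if_pos ⟨m, rfl⟩, Nat.mul_div_cancel_left _ two_pos, PowerSeries.coeff_mul]
    have hinj : ∀ p ∈ Finset.HasAntidiagonal.antidiagonal m, ∀ q ∈ Finset.HasAntidiagonal.antidiagonal m,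
        (fun p : ℕ×ℕ => ((2*p.1, 2*p.2) : ℕ × ℕ)) p =
        (fun p : ℕ×ℕ => ((2*p.1, 2*p.2) : ℕ × ℕ)) q → p = q := by
      intro p _ q _ h
      simp only [Prod.mk.injEq] at h
      cases p; cases q
      simp only [Prod.mk.injEq]
      omega
    have himg : ((Finset.HasAntidiagonal.antidiagonal m).image fun p : ℕ×ℕ => ((2*p.1, 2*p.2) : ℕ × ℕ)) ⊆
        Finset.HasAntidiagonal.antidiagonal (2*m) := by
      intro p hp
      simp only [Finset.mem_image, Finset.HasAntidiagonal.mem_antidiagonal] at hp ⊢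
      obtain ⟨q, hq, rfl⟩ := hp; omega
    have hzero : ∀ p ∈ Finset.HasAntidiagonal.antidiagonal (2*m),
        p ∉ ((Finset.HasAntidiagonal.antidiagonal m).image fun p : ℕ×ℕ => ((2*p.1, 2*p.2) : ℕ × ℕ)) →
        PowerSeries.coeff p.1 (sqr f) * PowerSeries.coeff p.2 (sqr g) = 0 := by
      intro p hp hnp
      obtain ⟨x, y⟩ := p
      simp only [Finset.mem_image, Finset.HasAntidiagonal.mem_antidiagonal] at hp hnp
      by_cases hp1 : 2 ∣ x
      · exfalso
        obtain ⟨a, ha⟩ := hp1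
        exact hnp ⟨(a, m - a), by omega, by simp only [Prod.mk.injEq]; omega⟩
      · rw [coeff_sqr f, if_neg hp1, zero_mul]
    rw [← Finset.sum_subset himg hzero, Finset.sum_image hinj]
    refine Finset.sum_congr rfl fun p hp => ?_
    rw [coeff_sqr_two_mul, coeff_sqr_two_mul]
  · rw [if_neg h2]
    refine (Finset.sum_eq_zero fun p hp => ?_).symm
    rw [Finset.HasAntidiagonal.mem_antidiagonal] at hp
    rcases em (2 ∣ p.1) with hp1 | hp1
    · rw [coeff_sqr g, if_neg (by omega), mul_zero]
    · rw [coeff_sqr f, if_neg hp1, zero_mul]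

lemma sqr_pow (f : PowerSeries ℤ) : ∀ e : ℕ, sqr (f ^ e) = sqr f ^ e
  | 0 => by simpa using sqr_one
  | e+1 => by rw [pow_succ, sqr_mul, sqr_pow f e, pow_succ]

lemma sqr_prod (g : ℕ → PowerSeries ℤ) : ∀ m : ℕ,
    sqr (∏ k ∈ Finset.range m, g k) = ∏ k ∈ Finset.range m, sqr (g k)
  | 0 => by simpa using sqr_one
  | m+1 => by rw [Finset.prod_range_succ, sqr_mul, sqr_prod g m, Finset.prod_range_succ]

lemma sqr_X_pow (j : ℕ) : sqr ((X : PowerSeries ℤ) ^ j) = X ^ (2 * j) := by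
  ext n
  simp only [coeff_sqr, PowerSeries.coeff_X_pow]
  split_ifs <;> omega

lemma eq_one_of_sqr_fixed (f : PowerSeries ℤ) (h : sqr f = f)
    (h0 : PowerSeries.coeff 0 f = 1) : f = 1 := by
  ext n
  induction n using Nat.strong_induction_on with
  | _ n ih =>
    rcases Nat.eq_zero_or_pos n with rfl | hn
    · simpa using h0
    · rw [PowerSeries.coeff_one, if_neg (by omega), ← h, coeff_sqr]
      rcases em (2 ∣ n) with h2 | h2
      · rw [if_pos h2]
        have hlt : n / 2 < n := by omega
        have h4 := ih (n/2) hlt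
        rw [PowerSeries.coeff_one, if_neg (by omega)] at h4
        exact h4
      · rw [if_neg h2]

lemma sqr_dvd_sub_one {m : ℕ} {a : PowerSeries ℤ} (h : (X:PowerSeries ℤ)^m ∣ a - 1) :
    (X:PowerSeries ℤ)^(2*m) ∣ sqr a - 1 := by
  have h1 : sqr a - 1 = sqr (a - 1) := by rw [sqr_sub, sqr_one]
  rw [h1, PowerSeries.X_pow_dvd_iff]
  intro i hi
  rw [coeff_sqr]
  split
  · exact (PowerSeries.X_pow_dvd_iff.mp h) (i/2) (by omega)
  · rfl

lemma sqr_iProd (g : ℕ → PowerSeries ℤ) (hg : Good g) :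
    sqr (iProd g) = iProd (fun k => sqr (g k)) := by
  ext n
  rw [coeff_iProd' (fun k => sqr (g k)) n]
  have hstab : PowerSeries.coeff n (∏ k ∈ Finset.range (n+1), sqr (g k)) =
      PowerSeries.coeff n (∏ k ∈ Finset.range (n/2+1), sqr (g k)) :=
    coeff_prod_stable _ n (n+1) (n/2+1) (by omega) (fun k hk _ =>
      dvd_trans (pow_dvd_pow _ (by omega)) (sqr_dvd_sub_one (hg k)))
  rw [hstab, ← sqr_prod, coeff_sqr, coeff_sqr]
  by_cases h2 : 2 ∣ n
  · rw [if_pos h2, if_pos h2]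
    exact coeff_iProd' g (n/2)
  · rw [if_neg h2, if_neg h2]

/-! ### Goodness of the relevant families -/

lemma good_one_sub (j : ℕ) (hj : 1 ≤ j) :
    Good (fun k => 1 - (X:PowerSeries ℤ)^(j*(k+1))) := by
  intro k
  have h : (1 - (X:PowerSeries ℤ)^(j*(k+1))) - 1 = -(X^(j*(k+1))) := by ring
  rw [h]
  exact Dvd.dvd.neg_right (pow_dvd_pow _ (by nlinarith))

lemma good_one_add (j : ℕ) (hj : 1 ≤ j) :
    Good (fun k => 1 + (X:PowerSeries ℤ)^(j*(k+1))) := by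
  intro k
  have h : (1 + (X:PowerSeries ℤ)^(j*(k+1))) - 1 = X^(j*(k+1)) := by ring
  rw [h]
  exact pow_dvd_pow _ (by nlinarith)

lemma good_pow {g : ℕ → PowerSeries ℤ} (hg : Good g) (e : ℕ → ℕ) :
    Good (fun k => g k ^ e k) := fun k => dvd_sub_one_pow (hg k) (e k)

lemma good_fneg : Good (fun k => 1 + (X:PowerSeries ℤ)^(k+1)) := by
  have h := good_one_add 1 le_rfl
  simpa using h

lemma good_fneg2 : Good (fun k => 1 + (X:PowerSeries ℤ)^(2*(k+1))) := good_one_add 2 (by omega)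

/-! ### Key identities -/

lemma fneg_mul_F1 : Fneg * F 1 = F 2 := by
  rw [Fneg, F, ← iProd_mul good_fneg (good_one_sub 1 le_rfl)]
  rw [F]
  refine congrArg iProd (funext fun k => ?_)
  have h : ∀ a:ℕ, (1+(X:PowerSeries ℤ)^a) * (1 - X^a) = 1 - X^(2*a) := fun a => by
    rw [two_mul, pow_add]; ring
  simpa using h (k+1)

lemma sqr_F1 : sqr (F 1) = F 2 := by
  rw [F, sqr_iProd _ (good_one_sub 1 le_rfl), F]
  refine congrArg iProd (funext fun k => ?_)
  rw [sqr_sub, sqr_one, sqr_X_pow]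
  norm_num

lemma sqr_fneg : sqr Fneg = iProd (fun k => 1 + (X:PowerSeries ℤ)^(2*(k+1))) := by
  rw [Fneg, sqr_iProd _ good_fneg]
  refine congrArg iProd (funext fun k => ?_)
  rw [sqr_add, sqr_one, sqr_X_pow]

/-- `G = ∏_{k≥1} (1+q^k)^{ν₂ k}` -/
noncomputable def G : PowerSeries ℤ :=
  iProd fun k => (1 + (X:PowerSeries ℤ)^(k+1)) ^ (padicValNat 2 (k+1))

lemma good_G : Good (fun k => (1 + (X:PowerSeries ℤ)^(k+1)) ^ (padicValNat 2 (k+1))) :=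
  good_pow good_fneg _

lemma sqr_G : sqr G = iProd (fun k => (1 + (X:PowerSeries ℤ)^(2*(k+1))) ^ (padicValNat 2 (k+1))) := by
  rw [G, sqr_iProd _ good_G]
  refine congrArg iProd (funext fun k => ?_)
  rw [sqr_pow, sqr_add, sqr_one, sqr_X_pow]

lemma prod_reindex : ∀ m : ℕ,
    (∏ k ∈ Finset.range (2*m), (1+(X:PowerSeries ℤ)^(k+1))^(padicValNat 2 (k+1))) =
    ∏ k ∈ Finset.range m, (1+(X:PowerSeries ℤ)^(2*(k+1)))^(1 + padicValNat 2 (k+1))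
  | 0 => by simp
  | m+1 => by
    have h2m : 2*(m+1) = (2*m)+1+1 := by ring
    rw [Finset.prod_range_succ, ← prod_reindex m, h2m, Finset.prod_range_succ,
      Finset.prod_range_succ]
    have hodd : padicValNat 2 (2*m+1) = 0 := padicValNat.eq_zero_of_not_dvd (by omega)
    have heven : padicValNat 2 (2*m+1+1) = 1 + padicValNat 2 (m+1) := by
      have h : 2*m+1+1 = 2*(m+1) := by ring
      rw [h, padicValNat.mul (p := 2) two_ne_zero (by omega), padicValNat.self one_lt_two]
    rw [hodd, pow_zero, mul_one, heven]

lemma G_eq : G = iProd (fun k => (1+(X:PowerSeries ℤ)^(2*(k+1)))^(1 + padicValNat 2 (k+1))) := by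
  rw [G]
  ext n
  rw [coeff_iProd', coeff_iProd']
  rw [← coeff_prod_stable _ n (2*(n+1)) (n+1) (by omega)
    (fun k hk _ => dvd_trans (pow_dvd_pow _ (by omega)) (good_G k))]
  rw [prod_reindex (n+1)]

lemma sqr_fnegG : sqr (Fneg * G) = G := by
  rw [sqr_mul, sqr_fneg, sqr_G, ← iProd_mul good_fneg2 (good_pow good_fneg2 _), G_eq]
  refine congrArg iProd (funext fun k => ?_)
  rw [pow_add, pow_one]

lemma c0_iProd (g : ℕ → PowerSeries ℤ) :
    PowerSeries.coeff 0 (iProd g) = PowerSeries.coeff 0 (g 0) := by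
  rw [coeff_iProd', Finset.prod_range_one]

lemma c0_fneg : PowerSeries.constantCoeff Fneg = 1 := by
  rw [← PowerSeries.coeff_zero_eq_constantCoeff_apply, Fneg, c0_iProd]
  simp

lemma c0_G : PowerSeries.constantCoeff G = 1 := by
  rw [← PowerSeries.coeff_zero_eq_constantCoeff_apply, G, c0_iProd]
  simp [padicValNat.one]

lemma c0_F1 : PowerSeries.constantCoeff (F 1) = 1 := by
  rw [← PowerSeries.coeff_zero_eq_constantCoeff_apply, F, c0_iProd]
  simp

lemma key : Fneg * G * F 1 = 1 := by
  apply eq_one_of_sqr_fixed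
  · rw [sqr_mul, sqr_fnegG, sqr_F1, ← fneg_mul_F1]
    ring
  · rw [PowerSeries.coeff_zero_eq_constantCoeff_apply, map_mul, map_mul, c0_fneg, c0_G, c0_F1]
    ring

lemma R_eq : (iProd fun k =>
    (1 + (PowerSeries.X : PowerSeries ℤ) ^ (k + 1)) ^ (3 + padicValNat 2 (k + 1)))
    = Fneg^3 * G := by
  have h1 : iProd (fun k => (1+(X:PowerSeries ℤ)^(k+1))^(1 + padicValNat 2 (k+1)))
      = Fneg * G := by
    rw [Fneg, G, ← iProd_mul good_fneg good_G]
    refine congrArg iProd (funext fun k => ?_)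
    rw [pow_add, pow_one]
  have h2 : iProd (fun k => (1+(X:PowerSeries ℤ)^(k+1))^(2 + padicValNat 2 (k+1)))
      = Fneg * (Fneg * G) := by
    rw [← h1, Fneg, ← iProd_mul good_fneg (good_pow good_fneg _)]
    refine congrArg iProd (funext fun k => ?_)
    rw [show 2 + padicValNat 2 (k+1) = 1 + (1 + padicValNat 2 (k+1)) from by omega,
      pow_add, pow_add, pow_one, pow_one]
  rw [show (Fneg^3 * G : PowerSeries ℤ) = Fneg * (Fneg * (Fneg * G)) from by ring, ← h2,
    Fneg, ← iProd_mul good_fneg (good_pow good_fneg _)]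
  refine congrArg iProd (funext fun k => ?_)
  rw [show 3 + padicValNat 2 (k+1) = 1 + (2 + padicValNat 2 (k+1)) from by omega,
    pow_add, pow_add, pow_one, pow_one]

/-- `(−q;q)∞²/(q;q)∞ = ∏_{n≥1} (1 + qⁿ)^(3 + ν₂ n)`. -/
theorem genA_eq_colored_product :
    Fneg ^ 2 * psInv (F 1) =
      iProd fun k =>
        (1 + (PowerSeries.X : PowerSeries ℤ) ^ (k + 1)) ^ (3 + padicValNat 2 (k + 1)) := by
  rw [R_eq]
  have hF1 : F 1 ≠ 0 := by
    intro h
    have h0 := c0_F1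
    rw [h, map_zero] at h0
    exact absurd h0 (by norm_num)
  have hinv : F 1 * psInv (F 1) = 1 :=
    PowerSeries.mul_invOfUnit (F 1) 1 (by rw [c0_F1, Units.val_one])
  apply mul_right_cancel₀ hF1
  have hP := key
  linear_combination Fneg ^ 2 * hinv - Fneg ^ 2 * hP
end

section
/- For all n ≥ 1, the identity 1/∏_{k≥1}(1 − q^k) = ∏_{k≥1}(1 + q^k)^{ν₂(2k)} holds as formal power series, where ν₂ is the 2-adic valuation. -/
open PowerSeries Finset

section aux

variable {R : Type*} [CommRing R]

private lemma dvd_mul_sub_one {d a b : R} (ha : d ∣ a - 1) (hb : d ∣ b - 1) :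
    d ∣ a * b - 1 := by
  have h : a * b - 1 = a * (b - 1) + (a - 1) := by ring
  rw [h]
  exact dvd_add (hb.mul_left a) ha

private lemma dvd_pow_sub_one {d a : R} (ha : d ∣ a - 1) (e : ℕ) : d ∣ a ^ e - 1 := by
  induction e with
  | zero => simp
  | succ n ih => rw [pow_succ]; exact dvd_mul_sub_one ih ha

private lemma dvd_prod_sub_one {ι : Type*} {d : R} {s : Finset ι} {f : ι → R}
    (h : ∀ i ∈ s, d ∣ f i - 1) : d ∣ (∏ i ∈ s, f i) - 1 := by
  classical
  induction s using Finset.induction_on with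
  | empty => simp
  | insert _ _ hx ih =>
    rw [Finset.prod_insert hx]
    exact dvd_mul_sub_one (h _ (Finset.mem_insert_self _ _))
      (ih fun i hi => h i (Finset.mem_insert_of_mem hi))

private lemma telescope (x : R) (t : ℕ) :
    (1 - x) * ∏ i ∈ range t, (1 + x ^ (2 ^ i)) = 1 - x ^ (2 ^ t) := by
  induction t with
  | zero => simp
  | succ t ih =>
    rw [prod_range_succ, ← mul_assoc, ih]
    have h : x ^ 2 ^ (t + 1) = x ^ 2 ^ t * x ^ 2 ^ t := by
      rw [← pow_add, pow_succ, mul_two]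
    rw [h]; ring

end aux

private lemma prod_range_shift (f : ℕ → PowerSeries ℤ) (N : ℕ) :
    ∏ k ∈ range N, f (k + 1) = ∏ m ∈ Icc 1 N, f m := by
  rw [← Finset.Ico_add_one_right_eq_Icc, Finset.prod_Ico_eq_prod_range]
  simp [add_comm]

/-- coefficients below `n` of a multiple of `X^n` vanish, so divisibility of differences
gives equality of low coefficients. -/
private lemma coeff_eq_of_dvd {n i : ℕ} {f g : PowerSeries ℤ}
    (h : (X : PowerSeries ℤ) ^ n ∣ f - g) (hi : i < n) :
    PowerSeries.coeff i f = PowerSeries.coeff i g := by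
  have := (PowerSeries.X_pow_dvd_iff.mp h) i hi
  rw [map_sub, sub_eq_zero] at this
  exact this

/-- The key combinatorial identity at a finite level. -/
private lemma key_s5 (N : ℕ) :
    (X : PowerSeries ℤ) ^ (N + 1) ∣
      (∏ m ∈ Icc 1 N, (1 - (X : PowerSeries ℤ) ^ m)) *
        (∏ m ∈ Icc 1 N, (1 + (X : PowerSeries ℤ) ^ m) ^ (padicValNat 2 (2 * m))) - 1 := by
  haveI : Fact (Nat.Prime 2) := ⟨Nat.prime_two⟩
  -- the index set of pairs (k, i) with 1 ≤ k ≤ N and k * 2^i ≤ N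
  set S : Finset ((_ : ℕ) × ℕ) :=
    (Icc 1 N).sigma (fun k => (range (N + 1)).filter fun i => k * 2 ^ i ≤ N) with hS
  -- step 1: the second product equals the product over S
  have hQ : (∏ m ∈ Icc 1 N, (1 + (X : PowerSeries ℤ) ^ m) ^ (padicValNat 2 (2 * m))) =
      ∏ p ∈ S, (1 + (X : PowerSeries ℤ) ^ (p.1 * 2 ^ p.2)) := by
    rw [← Finset.prod_fiberwise_of_maps_to (g := fun p : (_ : ℕ) × ℕ => p.1 * 2 ^ p.2)
      (t := Icc 1 N) (fun p hp => by
        simp only [hS, Finset.mem_sigma, Finset.mem_filter, Finset.mem_range, mem_Icc] at hp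
        refine mem_Icc.mpr ⟨le_mul_of_one_le_of_le hp.1.1 (Nat.one_le_two_pow), hp.2.2⟩)]
    refine Finset.prod_congr rfl fun m hm => ?_
    rw [mem_Icc] at hm
    have hm0 : m ≠ 0 := by omega
    -- each fiber element contributes 1 + X^m
    have hfib : ∀ p ∈ S.filter (fun p : (_ : ℕ) × ℕ => p.1 * 2 ^ p.2 = m),
        (1 + (X : PowerSeries ℤ) ^ (p.1 * 2 ^ p.2)) = 1 + (X : PowerSeries ℤ) ^ m := by
      intro p hp
      rw [Finset.mem_filter] at hp
      rw [hp.2]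
    rw [Finset.prod_congr rfl hfib, Finset.prod_const]
    congr 1
    -- count the fiber
    have hcard : (S.filter (fun p : (_ : ℕ) × ℕ => p.1 * 2 ^ p.2 = m)).card =
        padicValNat 2 m + 1 := by
      rw [← Finset.card_range (padicValNat 2 m + 1)]
      refine (Finset.card_nbij (fun i => ⟨m / 2 ^ i, i⟩) ?_ ?_ ?_).symm
      · intro i hi
        rw [Finset.mem_coe, Finset.mem_range, Nat.lt_succ_iff] at hi
        have hdvd : 2 ^ i ∣ m := (padicValNat_dvd_iff_le hm0).mpr hi
        have hmul : m / 2 ^ i * 2 ^ i = m := Nat.div_mul_cancel hdvd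
        have h2i : 2 ^ i ≤ m := Nat.le_of_dvd (by omega) hdvd
        simp only [hS, Finset.mem_coe, Finset.mem_filter, Finset.mem_sigma, mem_Icc, Finset.mem_range]
        refine ⟨⟨⟨?_, ?_⟩, ?_, ?_⟩, hmul⟩
        · exact Nat.one_le_div_iff (Nat.pos_of_ne_zero (by positivity)) |>.mpr h2i
        · exact le_trans (Nat.div_le_self _ _) hm.2
        · have : i < 2 ^ i := Nat.lt_two_pow_self
          omega
        · rw [hmul]; exact hm.2
      · intro a _ b _ hab
        simpa using congrArg Sigma.snd hab
      · rintro ⟨k, i⟩ hp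
        simp only [hS, Finset.mem_coe, Finset.mem_filter, Finset.mem_sigma, mem_Icc,
          Finset.mem_range] at hp
        obtain ⟨⟨⟨hk1, _⟩, _, _⟩, hki⟩ := hp
        have hdvd : 2 ^ i ∣ m := ⟨k, by rw [← hki, mul_comm]⟩
        have hile : i ≤ padicValNat 2 m := (padicValNat_dvd_iff_le hm0).mp hdvd
        refine ⟨i, by simp [Nat.lt_succ_iff, hile], ?_⟩
        have : m / 2 ^ i = k := by
          rw [← hki, Nat.mul_div_cancel _ (Nat.pos_of_ne_zero (by positivity))]
        simp [this]
    rw [hcard, padicValNat.mul (by norm_num) hm0, padicValNat.self (by norm_num), add_comm]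
  rw [hQ, hS, Finset.prod_sigma, ← Finset.prod_mul_distrib]
  -- step 2: per-k telescoping
  have hfac : ∀ k ∈ Icc 1 N,
      (1 - (X : PowerSeries ℤ) ^ k) *
        ∏ i ∈ (range (N + 1)).filter (fun i => k * 2 ^ i ≤ N),
          (1 + (X : PowerSeries ℤ) ^ (k * 2 ^ i)) =
      1 - (X : PowerSeries ℤ) ^ (k * 2 ^ (Nat.log 2 (N / k) + 1)) := by
    intro k hk
    rw [mem_Icc] at hk
    have hk0 : 0 < k := hk.1
    have hNk : N / k ≠ 0 := by
      have := (Nat.one_le_div_iff hk0).mpr hk.2; omega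
    have hfilter : (range (N + 1)).filter (fun i => k * 2 ^ i ≤ N) =
        range (Nat.log 2 (N / k) + 1) := by
      ext i
      simp only [Finset.mem_filter, Finset.mem_range, Nat.lt_succ_iff]
      constructor
      · rintro ⟨_, h2⟩
        rw [Nat.le_log_iff_pow_le one_lt_two hNk, Nat.le_div_iff_mul_le hk0, mul_comm]
        exact h2
      · intro h
        have h2 : 2 ^ i ≤ N / k := (Nat.le_log_iff_pow_le one_lt_two hNk).mp h
        have h3 : 2 ^ i * k ≤ N := (Nat.le_div_iff_mul_le hk0).mp h2
        have h4 : i < 2 ^ i := Nat.lt_two_pow_self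
        have h5 : 2 ^ i ≤ N := le_trans h2 (Nat.div_le_self _ _)
        exact ⟨by omega, by rw [mul_comm]; exact h3⟩
    rw [hfilter]
    have hx : ∀ i : ℕ, (X : PowerSeries ℤ) ^ (k * 2 ^ i) = ((X : PowerSeries ℤ) ^ k) ^ (2 ^ i) :=
      fun i => by rw [← pow_mul]
    simp only [hx]
    exact telescope _ _
  rw [Finset.prod_congr rfl hfac]
  -- step 3: each factor is 1 mod X^(N+1)
  refine dvd_prod_sub_one fun k hk => ?_
  rw [mem_Icc] at hk
  have hk0 : 0 < k := hk.1
  have hNk : N / k ≠ 0 := by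
    have := (Nat.one_le_div_iff hk0).mpr hk.2; omega
  have hbig : N < k * 2 ^ (Nat.log 2 (N / k) + 1) := by
    by_contra hle
    push_neg at hle
    have h2 : 2 ^ (Nat.log 2 (N / k) + 1) ≤ N / k := by
      rw [Nat.le_div_iff_mul_le hk0, mul_comm]; exact hle
    have := (Nat.le_log_iff_pow_le one_lt_two hNk).mpr h2
    omega
  have h1 : (1 - (X : PowerSeries ℤ) ^ (k * 2 ^ (Nat.log 2 (N / k) + 1))) - 1 =
      -((X : PowerSeries ℤ) ^ (k * 2 ^ (Nat.log 2 (N / k) + 1))) := by ring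
  rw [h1]
  exact (pow_dvd_pow _ (by omega)).neg_right

/-- Stabilization: partial products agree with longer partial products in low degrees. -/
private lemma iProd_truncate {g : ℕ → PowerSeries ℤ}
    (hg : ∀ k, (X : PowerSeries ℤ) ^ (k + 1) ∣ g k - 1) (n : ℕ) :
    (X : PowerSeries ℤ) ^ (n + 1) ∣ iProd g - ∏ k ∈ range (n + 1), g k := by
  rw [PowerSeries.X_pow_dvd_iff]
  intro m hm
  rw [map_sub, sub_eq_zero]
  show PowerSeries.coeff m (iProd g) = _
  rw [iProd, PowerSeries.coeff_mk]
  have hsub : range (m + 1) ⊆ range (n + 1) := Finset.range_subset_range.mpr (by omega)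
  rw [← Finset.prod_sdiff hsub]
  have hdvd : (X : PowerSeries ℤ) ^ (m + 1) ∣
      (∏ k ∈ range (n + 1) \ range (m + 1), g k) - 1 := by
    refine dvd_prod_sub_one fun k hk => ?_
    rw [Finset.mem_sdiff, Finset.mem_range, Finset.mem_range] at hk
    exact dvd_trans (pow_dvd_pow _ (by omega)) (hg k)
  obtain ⟨c, hc⟩ := hdvd
  have : (∏ k ∈ range (n + 1) \ range (m + 1), g k) = 1 + X ^ (m + 1) * c := by
    rw [← hc]; ring
  rw [this]
  have hzero : PowerSeries.coeff m ((X : PowerSeries ℤ) ^ (m + 1) * c *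
      ∏ k ∈ range (m + 1), g k) = 0 := by
    have : (X : PowerSeries ℤ) ^ (m + 1) ∣
        (X : PowerSeries ℤ) ^ (m + 1) * c * ∏ k ∈ range (m + 1), g k :=
      Dvd.dvd.mul_right (Dvd.intro c rfl) _
    exact PowerSeries.X_pow_dvd_iff.mp this m (by omega)
  have hsplit : (1 + X ^ (m + 1) * c) * ∏ k ∈ range (m + 1), g k =
      (∏ k ∈ range (m + 1), g k) + X ^ (m + 1) * c * ∏ k ∈ range (m + 1), g k := by ring
  rw [hsplit, map_add, hzero, add_zero]

private lemma hg1 : ∀ k, (X : PowerSeries ℤ) ^ (k + 1) ∣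
    (1 - (X : PowerSeries ℤ) ^ (1 * (k + 1))) - 1 := by
  intro k
  have : (1 - (X : PowerSeries ℤ) ^ (1 * (k + 1))) - 1 = -((X : PowerSeries ℤ) ^ (k + 1)) := by
    rw [one_mul]; ring
  rw [this]
  exact dvd_neg.mpr dvd_rfl

private lemma hg2 : ∀ k, (X : PowerSeries ℤ) ^ (k + 1) ∣
    (1 + (PowerSeries.X : PowerSeries ℤ) ^ (k + 1)) ^ (padicValNat 2 (2 * (k + 1))) - 1 := by
  intro k
  refine dvd_pow_sub_one ?_ _
  simp

/-- `1/∏_{k≥1}(1 − q^k) = ∏_{k≥1}(1 + q^k)^(ν₂ (2k))`. -/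
theorem inv_euler_eq_product :
    psInv (F 1) =
      iProd fun k =>
        (1 + (PowerSeries.X : PowerSeries ℤ) ^ (k + 1)) ^ (padicValNat 2 (2 * (k + 1))) := by
  haveI : Fact (Nat.Prime 2) := ⟨Nat.prime_two⟩
  set g : ℕ → PowerSeries ℤ :=
    fun k => (1 + (PowerSeries.X : PowerSeries ℤ) ^ (k + 1)) ^ (padicValNat 2 (2 * (k + 1)))
    with hgdef
  have hF0 : PowerSeries.constantCoeff (F 1) = 1 := by
    rw [F, iProd, ← PowerSeries.coeff_zero_eq_constantCoeff_apply, PowerSeries.coeff_mk]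
    simp
  -- F 1 * psInv (F 1) = 1
  have hinv : F 1 * psInv (F 1) = 1 :=
    PowerSeries.mul_invOfUnit (F 1) 1 (by rw [hF0]; rfl)
  -- F 1 * iProd g = 1
  have hmain : F 1 * iProd g = 1 := by
    ext n
    have h1 := iProd_truncate hg1 n
    have h2 := iProd_truncate (g := g) (fun k => hg2 k) n
    set A : PowerSeries ℤ := ∏ k ∈ range (n + 1), (1 - (X : PowerSeries ℤ) ^ (1 * (k + 1)))
      with hA
    set B : PowerSeries ℤ := ∏ k ∈ range (n + 1), g k with hB
    -- rewrite A and B as Icc products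
    have hA' : A = ∏ m ∈ Icc 1 (n + 1), (1 - (X : PowerSeries ℤ) ^ m) := by
      rw [hA, ← prod_range_shift (fun m => 1 - (X : PowerSeries ℤ) ^ m) (n + 1)]
      simp
    have hB' : B = ∏ m ∈ Icc 1 (n + 1),
        (1 + (X : PowerSeries ℤ) ^ m) ^ (padicValNat 2 (2 * m)) := by
      rw [hB, ← prod_range_shift
        (fun m => (1 + (X : PowerSeries ℤ) ^ m) ^ (padicValNat 2 (2 * m))) (n + 1)]
    have hAB : (X : PowerSeries ℤ) ^ (n + 1) ∣ A * B - 1 := by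
      rw [hA', hB']
      exact dvd_trans (pow_dvd_pow _ (by omega)) (key_s5 (n + 1))
    have hdvd : (X : PowerSeries ℤ) ^ (n + 1) ∣ F 1 * iProd g - 1 := by
      have expand : F 1 * iProd g - 1 =
          F 1 * (iProd g - B) + (F 1 - A) * B + (A * B - 1) := by ring
      rw [expand]
      exact dvd_add (dvd_add (h2.mul_left _) (h1.mul_right _)) hAB
    exact coeff_eq_of_dvd hdvd (show n < n + 1 by omega)
  -- conclude by cancellation
  have hF_ne : F 1 ≠ 0 := fun h => by simp [h] at hF0
  exact mul_left_cancel₀ hF_ne (by rw [hinv, hmain])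
end

section
/- Let a(n) be defined by ∑_{n≥0} a(n) qⁿ = (−q;q)∞²/(q;q)∞. Then ∑_{n≥0} a(n) qⁿ ≡ (q;q)∞ (mod 4), i.e., a(n) is congruent modulo 4 to the n-th coefficient of Euler's product ∏_{k≥1}(1 − qᵏ). -/
open PowerSeries Finset

/-- `a n` is the coefficient of `q^n` in `(-q;q)_∞^2 / (q;q)_∞`. -/
noncomputable def a (n : ℕ) : ℤ := PowerSeries.coeff n (Fneg ^ 2 * psInv (F 1))

/-! Auxiliary development -/

/-- Partial products `∏_{k<m} (1 + ε k · X^(k+1))`. -/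
noncomputable def P {R : Type*} [CommRing R] (ε : ℕ → R) (m : ℕ) : PowerSeries R :=
  ∏ k ∈ Finset.range m, (1 + PowerSeries.C (ε k) * PowerSeries.X ^ (k + 1))

lemma coeff_P_stab {R : Type*} [CommRing R] (ε : ℕ → R) {i m m' : ℕ}
    (h : i < m) (h' : m ≤ m') :
    PowerSeries.coeff i (P ε m') = PowerSeries.coeff i (P ε m) := by
  induction m', h' using Nat.le_induction with
  | base => rfl
  | succ m' hm ih =>
      have key : PowerSeries.coeff i (P ε m' * (PowerSeries.C (ε m') *
          PowerSeries.X ^ (m' + 1))) = 0 := by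
        rw [show P ε m' * (PowerSeries.C (ε m') * PowerSeries.X ^ (m' + 1))
            = (P ε m' * PowerSeries.C (ε m')) * PowerSeries.X ^ (m' + 1) by ring,
          PowerSeries.coeff_mul_X_pow']
        have : ¬ m' + 1 ≤ i := by omega
        simp [this]
      rw [P, Finset.prod_range_succ, ← P, mul_add, mul_one, map_add, ih, key, add_zero]

lemma coeff_iProdP (ε : ℕ → ℤ) {i m : ℕ} (h : i < m) :
    PowerSeries.coeff i
      (iProd fun k => 1 + PowerSeries.C (ε k) * PowerSeries.X ^ (k + 1))
      = PowerSeries.coeff i (P ε m) := by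
  rw [iProd, PowerSeries.coeff_mk, ← P]
  exact (coeff_P_stab ε (Nat.lt_succ_self i) (by omega)).symm

lemma hF1 : F 1 = iProd fun k => 1 + PowerSeries.C (-1) * PowerSeries.X ^ (k + 1) := by
  have h : (fun k => 1 - (PowerSeries.X : PowerSeries ℤ) ^ (1 * (k + 1)))
      = fun k => 1 + PowerSeries.C (-1) * PowerSeries.X ^ (k + 1) := by
    funext k
    rw [one_mul, map_neg, map_one]
    ring
  rw [F, h]

lemma hFneg : Fneg = iProd fun k => 1 + PowerSeries.C (1 : ℤ) * PowerSeries.X ^ (k + 1) := by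
  have h : (fun k => 1 + (PowerSeries.X : PowerSeries ℤ) ^ (k + 1))
      = fun k => 1 + PowerSeries.C (1 : ℤ) * PowerSeries.X ^ (k + 1) := by
    funext k
    rw [map_one, one_mul]
  rw [Fneg, h]

noncomputable abbrev φ4 : ℤ →+* ZMod 4 := Int.castRingHom (ZMod 4)

lemma map_iProdP (ε : ℕ → ℤ) :
    PowerSeries.map φ4
      (iProd fun k => 1 + PowerSeries.C (ε k) * PowerSeries.X ^ (k + 1))
      = PowerSeries.mk fun n => PowerSeries.coeff n (P (fun k => φ4 (ε k)) (n + 1)) := by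
  ext n
  rw [PowerSeries.coeff_map, coeff_iProdP ε (Nat.lt_succ_self n), PowerSeries.coeff_mk,
    ← PowerSeries.coeff_map]
  congr 1
  unfold P
  rw [map_prod]
  apply Finset.prod_congr rfl
  intro k _
  simp [PowerSeries.map_C, PowerSeries.map_X]

lemma coeff_sq_map (ε : ℕ → ℤ) (n : ℕ) :
    PowerSeries.coeff n
      ((PowerSeries.map φ4
        (iProd fun k => 1 + PowerSeries.C (ε k) * PowerSeries.X ^ (k + 1))) ^ 2)
      = PowerSeries.coeff n ((P (fun k => φ4 (ε k)) (n + 1)) ^ 2) := by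
  rw [sq, sq, PowerSeries.coeff_mul, PowerSeries.coeff_mul]
  apply Finset.sum_congr rfl
  intro p hp
  have hpn : p.1 + p.2 = n := Finset.HasAntidiagonal.mem_antidiagonal.mp hp
  rw [map_iProdP, PowerSeries.coeff_mk, PowerSeries.coeff_mk]
  have e1 := coeff_P_stab (fun k => φ4 (ε k)) (Nat.lt_succ_self p.1) (show p.1 + 1 ≤ n + 1 by omega)
  have e2 := coeff_P_stab (fun k => φ4 (ε k)) (Nat.lt_succ_self p.2) (show p.2 + 1 ≤ n + 1 by omega)
  rw [e1, e2]

lemma four_eq_zero : (4 : PowerSeries (ZMod 4)) = 0 := by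
  rw [← map_ofNat (PowerSeries.C (R := ZMod 4)) 4, show (4 : ZMod 4) = 0 from by decide, map_zero]

lemma P_sq_eq (m : ℕ) :
    (P (fun k => φ4 ((fun _ => (1:ℤ)) k)) m) ^ 2
      = (P (fun k => φ4 ((fun _ => (-1:ℤ)) k)) m) ^ 2 := by
  unfold P
  rw [← Finset.prod_pow, ← Finset.prod_pow]
  apply Finset.prod_congr rfl
  intro k _
  have h : ((1 : PowerSeries (ZMod 4)) + PowerSeries.C (φ4 1) *
      PowerSeries.X ^ (k + 1)) ^ 2 -
      ((1 : PowerSeries (ZMod 4)) + PowerSeries.C (φ4 (-1)) *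
      PowerSeries.X ^ (k + 1)) ^ 2
      = 4 * (PowerSeries.X ^ (k + 1)) := by
    have h1 : (φ4 (1:ℤ)) = 1 := by simp
    have h2 : (φ4 (-1:ℤ)) = -1 := by simp
    rw [h1, h2, map_one, map_neg, map_one]
    ring
  have := sub_eq_zero.mp (by rw [h, four_eq_zero, zero_mul])
  exact this

/-- `∑ a(n) qⁿ ≡ (q;q)∞ (mod 4)`, coefficientwise. -/
theorem a_congruent_euler_mod_four (n : ℕ) :
    (4 : ℤ) ∣ (a n - PowerSeries.coeff n (F 1)) := by
  have key : (((a n - PowerSeries.coeff n (F 1)) : ℤ) : ZMod 4) = 0 := by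
    push_cast
    rw [sub_eq_zero]
    show φ4 (a n) = φ4 (PowerSeries.coeff n (F 1))
    rw [a]
    rw [← PowerSeries.coeff_map, ← PowerSeries.coeff_map]
    congr 1
    rw [map_mul, map_pow]
    -- abbreviations
    have hconst : PowerSeries.constantCoeff (F 1) = ((1 : ℤˣ) : ℤ) := by
      have : PowerSeries.constantCoeff (F 1) = PowerSeries.coeff 0 (F 1) := by
        simp [PowerSeries.coeff_zero_eq_constantCoeff]
      rw [this, F, iProd, PowerSeries.coeff_mk]
      simp
    have hmul : F 1 * psInv (F 1) = 1 := PowerSeries.mul_invOfUnit (F 1) 1 hconst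
    have hinv : PowerSeries.map φ4 (F 1) * PowerSeries.map φ4 (psInv (F 1)) = 1 := by
      rw [← map_mul, hmul, map_one]
    have hsq : (PowerSeries.map φ4 Fneg) ^ 2 = (PowerSeries.map φ4 (F 1)) ^ 2 := by
      ext m
      rw [hFneg, hF1, coeff_sq_map, coeff_sq_map, P_sq_eq]
    calc (PowerSeries.map φ4 Fneg) ^ 2 * PowerSeries.map φ4 (psInv (F 1))
        = (PowerSeries.map φ4 (F 1)) ^ 2 * PowerSeries.map φ4 (psInv (F 1)) := by rw [hsq]
      _ = PowerSeries.map φ4 (F 1) *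
          (PowerSeries.map φ4 (F 1) * PowerSeries.map φ4 (psInv (F 1))) := by ring
      _ = PowerSeries.map φ4 (F 1) := by rw [hinv, mul_one]
  exact (ZMod.intCast_zmod_eq_zero_iff_dvd _ 4).mp key
end

section
/- Let a(n) be defined by ∑_{n≥0} a(n) qⁿ = (−q;q)∞²/(q;q)∞. Then as formal power series with coefficients in ℤ/8ℤ, ∑_{n≥0} a(n) qⁿ ≡ 2·(−q;−q)∞ − (q;q)∞ (mod 8). -/
open PowerSeries Finset

/-- `(−q;−q)∞ = ∏_{k≥1}(1 − (−q)^k)` as a formal power series. -/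
noncomputable def FnegQ : PowerSeries ℤ :=
  iProd fun k => 1 - (-(PowerSeries.X : PowerSeries ℤ)) ^ (k + 1)

noncomputable abbrev RR := PowerSeries ℤ

-- basic coeff helpers
lemma coeff_two_mul (g : RR) (i : ℕ) : (PowerSeries.coeff i) (2 * g) = 2 * coeff i g := by
  have h2 : (2 : RR) = C 2 := by
    simp [map_ofNat]
  rw [h2, coeff_C_mul]

lemma exists_half {f : RR} (h : ∀ i, (2:ℤ) ∣ coeff i f) : ∃ g : RR, f = 2 * g := by
  refine ⟨PowerSeries.mk fun i => coeff i f / 2, ?_⟩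
  ext i
  rw [coeff_two_mul, coeff_mk]
  exact (Int.mul_ediv_cancel' (h i)).symm

lemma dvd_coeff_mul_right {c : ℤ} {g : RR} (h : ∀ i, c ∣ coeff i g) (f : RR) :
    ∀ i, c ∣ coeff i (f * g) := by
  intro i
  rw [PowerSeries.coeff_mul]
  exact Finset.dvd_sum fun p _ => Dvd.dvd.mul_left (h p.2) _

lemma dvd_coeff_mul_left {c : ℤ} {f : RR} (h : ∀ i, c ∣ coeff i f) (g : RR) :
    ∀ i, c ∣ coeff i (f * g) := by
  intro i
  rw [PowerSeries.coeff_mul]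
  exact Finset.dvd_sum fun p _ => Dvd.dvd.mul_right (h p.1) _

-- product of series each ≡ 1 mod X^M is ≡ 1 mod X^M
lemma prod_one_modX {s : Finset ℕ} {g : ℕ → RR} {M : ℕ}
    (hg : ∀ k ∈ s, (X:RR)^M ∣ (g k - 1)) : (X:RR)^M ∣ (∏ k ∈ s, g k - 1) := by
  classical
  induction s using Finset.induction_on with
  | empty => simp
  | @insert a s' ha ih =>
      rw [Finset.prod_insert ha]
      have h1 : g a * ∏ k ∈ s', g k - 1
          = (g a - 1) * ∏ k ∈ s', g k + (∏ k ∈ s', g k - 1) := by ring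
      rw [h1]
      exact dvd_add ((hg a (mem_insert_self a s')).mul_right _)
        (ih fun k hk => hg k (mem_insert_of_mem hk))



/-- substitution q ↦ q² coefficientwise -/
noncomputable def Tq (f : RR) : RR :=
  PowerSeries.mk fun n => if n % 2 = 0 then coeff (n/2) f else 0

lemma coeff_Tq (f : RR) (n : ℕ) :
    coeff n (Tq f) = if n % 2 = 0 then coeff (n/2) f else 0 := coeff_mk _ _

lemma coeff_Tq_double (f : RR) (m : ℕ) : coeff (2*m) (Tq f) = coeff m f := by
  rw [coeff_Tq]
  simp [Nat.mul_mod_right, Nat.mul_div_cancel_left _ (by norm_num : 0 < 2)]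

lemma Tq_sub (f g : RR) : Tq (f - g) = Tq f - Tq g := by
  ext n
  simp only [coeff_Tq, map_sub]
  split <;> simp

lemma Tq_one : Tq 1 = 1 := by
  ext n
  simp only [coeff_Tq, PowerSeries.coeff_one]
  by_cases h : n % 2 = 0
  · rw [if_pos h]
    by_cases h0 : n = 0
    · subst h0; norm_num
    · rw [if_neg (by omega), if_neg h0]
  · rw [if_neg h, if_neg (by omega)]

lemma Tq_X_pow (j : ℕ) : Tq ((X:RR)^j) = X^(2*j) := by
  ext n
  rw [coeff_Tq]
  simp only [PowerSeries.coeff_X_pow]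
  by_cases h : n % 2 = 0
  · rw [if_pos h]
    by_cases h2 : n / 2 = j
    · rw [if_pos h2, if_pos (by omega)]
    · rw [if_neg h2, if_neg (by omega)]
  · rw [if_neg h, if_neg (by omega)]

lemma Tq_mul (f g : RR) : Tq (f * g) = Tq f * Tq g := by
  ext n
  by_cases h : n % 2 = 0
  · obtain ⟨m, rfl⟩ : ∃ m, n = 2*m := ⟨n/2, by omega⟩
    rw [coeff_Tq_double, PowerSeries.coeff_mul, PowerSeries.coeff_mul]
    rw [← Finset.sum_filter_of_ne
      (p := fun p : ℕ × ℕ => p.1 % 2 = 0 ∧ p.2 % 2 = 0)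
      (f := fun p : ℕ × ℕ => coeff p.1 (Tq f) * coeff p.2 (Tq g))
      (fun p hp hne => by
        constructor
        · by_contra h1
          exact hne (by rw [coeff_Tq f p.1, if_neg h1, zero_mul])
        · by_contra h2
          exact hne (by rw [coeff_Tq g p.2, if_neg h2, mul_zero]))]
    refine Finset.sum_nbij' (fun p : ℕ × ℕ => (2*p.1, 2*p.2))
      (fun p : ℕ × ℕ => (p.1/2, p.2/2)) ?_ ?_ ?_ ?_ ?_
    · intro p hp
      rw [Finset.HasAntidiagonal.mem_antidiagonal] at hp
      simp only [Finset.mem_filter, Finset.HasAntidiagonal.mem_antidiagonal]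
      omega
    · intro p hp
      simp only [Finset.mem_filter, Finset.HasAntidiagonal.mem_antidiagonal] at hp
      rw [Finset.HasAntidiagonal.mem_antidiagonal]
      omega
    · intro p _
      simp [Nat.mul_div_cancel_left _ (by norm_num : 0 < 2)]
    · intro p hp
      simp only [Finset.mem_filter, Finset.HasAntidiagonal.mem_antidiagonal] at hp
      obtain ⟨h1, h2, h3⟩ := hp
      have e1 : 2 * (p.1 / 2) = p.1 := by omega
      have e2 : 2 * (p.2 / 2) = p.2 := by omega
      simp only []
      rw [e1, e2]
    · intro p _
      rw [coeff_Tq_double, coeff_Tq_double]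
  · have hR : coeff n (Tq f * Tq g) = 0 := by
      rw [PowerSeries.coeff_mul]
      apply Finset.sum_eq_zero
      intro p hp
      rw [Finset.HasAntidiagonal.mem_antidiagonal] at hp
      by_cases h1 : p.1 % 2 = 0
      · rw [coeff_Tq g p.2, if_neg (by omega), mul_zero]
      · rw [coeff_Tq f p.1, if_neg h1, zero_mul]
    rw [hR, coeff_Tq, if_neg h]

lemma Tq_prod {s : Finset ℕ} (f : ℕ → RR) : Tq (∏ k ∈ s, f k) = ∏ k ∈ s, Tq (f k) := by
  classical
  induction s using Finset.induction_on with
  | empty => simpa using Tq_one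
  | @insert a s' ha ih => rw [Finset.prod_insert ha, Finset.prod_insert ha, Tq_mul, ih]
lemma zmod2_swap_sum (b : ℕ → ZMod 2) {s : Finset (ℕ × ℕ)}
    (hswap : ∀ p ∈ s, (p.2, p.1) ∈ s) (hne : ∀ p ∈ s, p.1 ≠ p.2) :
    ∑ p ∈ s, b p.1 * b p.2 = 0 := by
  apply Finset.sum_involution (g := fun p _ => (p.2, p.1))
  · intro p hp
    have h : ∀ x y : ZMod 2, x*y + y*x = 0 := by decide
    exact h _ _
  · intro p hp _ hcon
    exact hne p hp (congrArg Prod.fst hcon).symm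
  · exact hswap
  · intro p hp; rfl

lemma zmod2_sum_antidiagonal (b : ℕ → ZMod 2) (n : ℕ) :
    ∑ p ∈ antidiagonal n, b p.1 * b p.2 = if n % 2 = 0 then b (n/2) else 0 := by
  by_cases h : n % 2 = 0
  · obtain ⟨m, rfl⟩ : ∃ m, n = 2*m := ⟨n/2, by omega⟩
    rw [if_pos h, Nat.mul_div_cancel_left _ (by norm_num : 0 < 2)]
    have hmem : ((m, m) : ℕ × ℕ) ∈ antidiagonal (2*m) := by
      rw [Finset.HasAntidiagonal.mem_antidiagonal]; omega
    rw [← Finset.add_sum_erase _ _ hmem]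
    have hz : ∑ p ∈ (antidiagonal (2*m)).erase (m, m), b p.1 * b p.2 = 0 := by
      apply zmod2_swap_sum
      · intro p hp
        rw [Finset.mem_erase, Finset.HasAntidiagonal.mem_antidiagonal] at hp ⊢
        refine ⟨fun hc => hp.1 ?_, by omega⟩
        have h1 : p.2 = m := congrArg Prod.fst hc
        have h2 : p.1 = m := congrArg Prod.snd hc
        rw [Prod.ext_iff]
        exact ⟨h2, h1⟩
      · intro p hp hc
        rw [Finset.mem_erase, Finset.HasAntidiagonal.mem_antidiagonal] at hp
        apply hp.1
        rw [Prod.ext_iff]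
        constructor <;> dsimp <;> omega
    rw [hz, add_zero]
    have h2 : ∀ x : ZMod 2, x * x = x := by decide
    exact h2 _
  · rw [if_neg h]
    apply zmod2_swap_sum
    · intro p hp
      rw [Finset.HasAntidiagonal.mem_antidiagonal] at hp ⊢
      omega
    · intro p hp hc
      rw [Finset.HasAntidiagonal.mem_antidiagonal] at hp
      omega

lemma frobenius_coeff (f : RR) (n : ℕ) : (2:ℤ) ∣ coeff n (f * f - Tq f) := by
  rw [show (2:ℤ) = ((2:ℕ):ℤ) from rfl, ← ZMod.intCast_zmod_eq_zero_iff_dvd, map_sub, Int.cast_sub, sub_eq_zero,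
    PowerSeries.coeff_mul, coeff_Tq]
  push_cast
  rw [zmod2_sum_antidiagonal (fun i => ((coeff i f : ℤ) : ZMod 2)) n]


lemma coeff_eq_zero_of_X_pow_dvd {f : RR} {M i : ℕ} (h : (X:RR)^M ∣ f) (hi : i < M) :
    coeff i f = 0 := by
  rw [PowerSeries.X_pow_dvd_iff] at h
  exact h i hi

lemma coeff_prod_mul_one_add {f h : RR} {M i : ℕ} (hi : i < M) :
    coeff i (f * (1 + (X:RR)^M * h)) = coeff i f := by
  rw [mul_add, mul_one, map_add]
  have hd : (X:RR)^M ∣ f * ((X:RR)^M * h) := Dvd.dvd.mul_left (dvd_mul_right _ _) f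
  rw [coeff_eq_zero_of_X_pow_dvd hd hi, add_zero]

lemma coeff_prod_stable_s9 {g : ℕ → RR} (hg : ∀ k, ∃ h, g k = 1 + (X:RR)^(k+1) * h)
    {i : ℕ} : ∀ {M M' : ℕ}, i < M → M ≤ M' →
    coeff i (∏ k ∈ range M', g k) = coeff i (∏ k ∈ range M, g k) := by
  intro M M' hiM hMM'
  induction M' with
  | zero => have : M = 0 := by omega
            subst this; rfl
  | succ M' ih =>
    rcases Nat.lt_or_ge M (M'+1) with h | h
    · have hM' : M ≤ M' := by omega
      rw [Finset.prod_range_succ]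
      obtain ⟨hh, hgh⟩ := hg M'
      rw [hgh, coeff_prod_mul_one_add (by omega), ih hM']
    · have : M = M' + 1 := by omega
      subst this; rfl

lemma coeff_iProd_s9 {g : ℕ → RR} (hg : ∀ k, ∃ h, g k = 1 + (X:RR)^(k+1) * h)
    {i M : ℕ} (hiM : i < M) :
    coeff i (iProd g) = coeff i (∏ k ∈ range M, g k) := by
  have h1 : coeff i (iProd g) = coeff i (∏ k ∈ range (i+1), g k) := coeff_mk _ _
  rcases Nat.le_total M (i+1) with h | h
  · rw [h1, coeff_prod_stable_s9 hg hiM h]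
  · rw [h1, coeff_prod_stable_s9 hg (Nat.lt_succ_self i) h]


noncomputable def pp (N : ℕ) : RR := ∏ k ∈ range N, (1 + (X:RR)^(k+1))
noncomputable def ee (N : ℕ) : RR := ∏ k ∈ range N, (1 - (X:RR)^(k+1))
noncomputable def mm (N : ℕ) : RR := ∏ k ∈ range N, (1 - (-(X:RR))^(k+1))
noncomputable def ppt (N : ℕ) : RR := ∏ k ∈ range N, (1 + (X:RR)^(2*(k+1)))
noncomputable def eet (N : ℕ) : RR := ∏ k ∈ range N, (1 - (X:RR)^(2*(k+1)))


lemma reindex_odd (K : ℕ) (G : ℕ → RR) :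
    ∏ k ∈ (range (2*K)).filter (fun k => ¬ k % 2 = 0), G k = ∏ i ∈ range K, G (2*i+1) := by
  refine (Finset.prod_nbij' (fun i => 2*i+1) (fun k => k/2) ?_ ?_ ?_ ?_ ?_).symm
  · intro i hi
    rw [Finset.mem_range] at hi
    simp only [Finset.mem_filter, Finset.mem_range]
    omega
  · intro k hk
    simp only [Finset.mem_filter, Finset.mem_range] at hk
    rw [Finset.mem_range]
    omega
  · intro i _; omega
  · intro k hk
    simp only [Finset.mem_filter, Finset.mem_range] at hk
    omega
  · intro i _; rfl

-- (A)
lemma pp_sigma (K : ℕ) :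
    pp (2*K) * (rescale (-1 : ℤ) (pp (2*K)))
      = (∏ k ∈ (range (2*K)).filter (fun k => k % 2 = 0), (1 - (X:RR)^(2*(k+1))))
        * (ppt K)^2 := by
  have hσ : rescale (-1 : ℤ) (pp (2*K)) = ∏ k ∈ range (2*K), (1 + (-(X:RR))^(k+1)) := by
    rw [pp, map_prod]
    refine Finset.prod_congr rfl fun k _ => ?_
    rw [map_add, map_one, map_pow, rescale_neg_one_X]
  rw [hσ, pp, ← Finset.prod_mul_distrib,
    ← Finset.prod_filter_mul_prod_filter_not (range (2*K)) (fun k => k % 2 = 0)]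
  congr 1
  · refine Finset.prod_congr rfl fun k hk => ?_
    rw [Finset.mem_filter] at hk
    have hodd : Odd (k+1) := by
      rcases hk with ⟨_, h⟩; exact ⟨k/2, by omega⟩
    rw [hodd.neg_pow]
    rw [show 2*(k+1) = (k+1)*2 by ring, pow_mul]
    ring
  · rw [reindex_odd]
    rw [ppt, ← Finset.prod_pow]
    refine Finset.prod_congr rfl fun i _ => ?_
    have heven : Even (2*i+1+1) := ⟨i+1, by ring⟩
    rw [heven.neg_pow, show 2*i+1+1 = 2*(i+1) by ring]
    ring

-- (B)
lemma eet_split (K : ℕ) :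
    eet (2*K)
      = (∏ k ∈ (range (2*K)).filter (fun k => k % 2 = 0), (1 - (X:RR)^(2*(k+1))))
        * ∏ i ∈ range K, (1 - (X:RR)^(4*(i+1))) := by
  rw [eet, ← Finset.prod_filter_mul_prod_filter_not (range (2*K)) (fun k => k % 2 = 0)]
  congr 1
  rw [reindex_odd]
  refine Finset.prod_congr rfl fun i _ => ?_
  rw [show 2*(2*i+1+1) = 4*(i+1) by ring]

-- (C)
lemma ppt_mul_eet (K : ℕ) : ppt K * eet K = ∏ i ∈ range K, (1 - (X:RR)^(4*(i+1))) := by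
  rw [ppt, eet, ← Finset.prod_mul_distrib]
  refine Finset.prod_congr rfl fun k _ => ?_
  rw [show 4*(k+1) = (2*(k+1))*2 by ring, pow_mul]
  ring

-- (D)
lemma ppt_split (K : ℕ) :
    ppt (2*K) = ppt K * ∏ i ∈ range K, (1 + (X:RR)^(2*(K+i+1))) := by
  simp only [ppt]
  rw [show 2*K = K + K by ring, Finset.prod_range_add]

lemma eet_split2 (K : ℕ) :
    eet (2*K) = eet K * ∏ i ∈ range K, (1 - (X:RR)^(2*(K+i+1))) := by
  simp only [eet]
  rw [show 2*K = K + K by ring, Finset.prod_range_add]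

-- (E)+(F)+(G)
lemma constantCoeff_eet (K : ℕ) : constantCoeff (eet K) = 1 := by
  rw [eet, map_prod]
  refine Finset.prod_eq_one fun k _ => ?_
  simp

lemma euler_key (K : ℕ) :
    (X:RR)^(2*K+2) ∣ (pp (2*K) * (rescale (-1 : ℤ) (pp (2*K))) - ppt (2*K)) := by
  have htEP : (X:RR)^(2*K+2) ∣
      ((∏ i ∈ range K, (1 - (X:RR)^(2*(K+i+1)))) - ∏ i ∈ range K, (1 + (X:RR)^(2*(K+i+1)))) := by
    have h1 : (∏ i ∈ range K, (1 - (X:RR)^(2*(K+i+1)))) - ∏ i ∈ range K, (1 + (X:RR)^(2*(K+i+1)))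
        = ((∏ i ∈ range K, (1 - (X:RR)^(2*(K+i+1)))) - 1)
          - ((∏ i ∈ range K, (1 + (X:RR)^(2*(K+i+1)))) - 1) := by ring
    rw [h1]
    refine dvd_sub ?_ ?_ <;>
    · apply prod_one_modX
      intro k _
      have hd : (X:RR)^(2*K+2) ∣ (X:RR)^(2*(K+k+1)) := pow_dvd_pow _ (by omega)
      · simpa [sub_sub_cancel_left, dvd_neg] using hd
  have hq : (∏ k ∈ (range (2*K)).filter (fun k => k % 2 = 0), (1 - (X:RR)^(2*(k+1))))
      * (ppt K * eet K)
      = eet K * ∏ i ∈ range K, (1 - (X:RR)^(2*(K+i+1))) := by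
    rw [ppt_mul_eet, ← eet_split, eet_split2]
  have hmain : (pp (2*K) * (rescale (-1 : ℤ) (pp (2*K))) - ppt (2*K)) * eet K
      = (ppt K * eet K) *
        ((∏ i ∈ range K, (1 - (X:RR)^(2*(K+i+1)))) - ∏ i ∈ range K, (1 + (X:RR)^(2*(K+i+1)))) := by
    rw [pp_sigma K, ppt_split K]
    linear_combination (ppt K) * hq
  have hdvd : (X:RR)^(2*K+2) ∣ (pp (2*K) * (rescale (-1 : ℤ) (pp (2*K))) - ppt (2*K)) * eet K := by
    rw [hmain]
    exact Dvd.dvd.mul_left htEP _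
  have hinv : eet K * invOfUnit (eet K) 1 = 1 :=
    PowerSeries.mul_invOfUnit _ _ (by rw [constantCoeff_eet]; rfl)
  have heq : pp (2*K) * (rescale (-1 : ℤ) (pp (2*K))) - ppt (2*K)
      = ((pp (2*K) * (rescale (-1 : ℤ) (pp (2*K))) - ppt (2*K)) * eet K) * invOfUnit (eet K) 1 := by
    rw [mul_assoc, hinv, mul_one]
  rw [heq]
  exact Dvd.dvd.mul_right hdvd _


-- mod 2 congruence of coefficients
def Cg2 (f g : RR) : Prop := ∀ i, (2:ℤ) ∣ coeff i (f - g)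

lemma Cg2_mul {f f' g g' : RR} (hf : Cg2 f f') (hg : Cg2 g g') : Cg2 (f*g) (f'*g') := by
  intro i
  have h1 : f*g - f'*g' = (f - f')*g + f'*(g - g') := by ring
  rw [h1, map_add]
  exact dvd_add (dvd_coeff_mul_left hf g i) (dvd_coeff_mul_right hg f' i)

lemma Cg2_prod {s : Finset ℕ} {f g : ℕ → RR} (h : ∀ k ∈ s, Cg2 (f k) (g k)) :
    Cg2 (∏ k ∈ s, f k) (∏ k ∈ s, g k) := by
  classical
  induction s using Finset.induction_on with
  | empty => intro i; simp
  | @insert a s' ha ih =>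
      rw [Finset.prod_insert ha, Finset.prod_insert ha]
      exact Cg2_mul (h a (mem_insert_self a s'))
        (ih fun k hk => h k (mem_insert_of_mem hk))

lemma Cg2_of_X_pow {j : ℕ} (c : ℤ) (b : RR) : Cg2 (b + 2*((C c) * (X:RR)^j)) b := by
  intro i
  have h : b + 2*((C c) * (X:RR)^j) - b = 2*((C c) * (X:RR)^j) := by ring
  rw [h, coeff_two_mul]
  exact Dvd.intro _ rfl

-- concrete congruences
lemma cg2_ee_pp (N : ℕ) : Cg2 (ee N) (pp N) := by
  apply Cg2_prod
  intro k _
  intro i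
  rw [show (1 - (X:RR)^(k+1)) - (1 + (X:RR)^(k+1)) = -(2 * (X:RR)^(k+1)) by ring,
    map_neg, dvd_neg, coeff_two_mul]
  exact Dvd.intro _ rfl

lemma cg2_pp_mm (N : ℕ) : Cg2 (pp N) (mm N) := by
  apply Cg2_prod
  intro k _ i
  rcases Nat.even_or_odd (k+1) with he | ho
  · rw [show (1 + (X:RR)^(k+1)) - (1 - (-(X:RR))^(k+1)) = (X:RR)^(k+1) + (-(X:RR))^(k+1) by ring,
      he.neg_pow, ← two_mul, coeff_two_mul]
    exact Dvd.intro _ rfl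
  · rw [show (1 + (X:RR)^(k+1)) - (1 - (-(X:RR))^(k+1)) = (X:RR)^(k+1) + (-(X:RR))^(k+1) by ring,
      ho.neg_pow]
    simp

lemma cg2_pp2_ppt (N : ℕ) : Cg2 (pp N * pp N) (ppt N) := by
  have h : pp N * pp N = ∏ k ∈ range N, (1 + (X:RR)^(k+1)) * (1 + (X:RR)^(k+1)) := by
    rw [pp, ← Finset.prod_mul_distrib]
  rw [h, ppt]
  apply Cg2_prod
  intro k _ i
  rw [show (1 + (X:RR)^(k+1)) * (1 + (X:RR)^(k+1)) - (1 + (X:RR)^(2*(k+1)))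
      = 2*(X:RR)^(k+1) + ((X:RR)^(k+1))^2 - (X:RR)^(2*(k+1)) by ring,
    show 2*(k+1) = (k+1)*2 by ring, pow_mul]
  rw [show 2*(X:RR)^(k+1) + ((X:RR)^(k+1))^2 - ((X:RR)^(k+1))^2 = 2*(X:RR)^(k+1) by ring,
    coeff_two_mul]
  exact Dvd.intro _ rfl

lemma cg2_eet_ppt (N : ℕ) : Cg2 (eet N) (ppt N) := by
  apply Cg2_prod
  intro k _ i
  rw [show (1 - (X:RR)^(2*(k+1))) - (1 + (X:RR)^(2*(k+1))) = -(2 * (X:RR)^(2*(k+1))) by ring,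
    map_neg, dvd_neg, coeff_two_mul]
  exact Dvd.intro _ rfl

lemma sigma_pp (N : ℕ) :
    rescale (-1 : ℤ) (pp N) = ∏ k ∈ range N, (1 + (-(X:RR))^(k+1)) := by
  rw [pp, map_prod]
  refine Finset.prod_congr rfl fun k _ => ?_
  rw [map_add, map_one, map_pow, rescale_neg_one_X]

lemma sigma_ee (N : ℕ) : rescale (-1 : ℤ) (ee N) = mm N := by
  rw [ee, mm, map_prod]
  refine Finset.prod_congr rfl fun k _ => ?_
  rw [map_sub, map_one, map_pow, rescale_neg_one_X]

lemma sigma_eet (N : ℕ) : rescale (-1 : ℤ) (eet N) = eet N := by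
  rw [eet, map_prod]
  refine Finset.prod_congr rfl fun k _ => ?_
  rw [map_sub, map_one, map_pow, rescale_neg_one_X]
  congr 1
  have he : Even (2*(k+1)) := ⟨k+1, by ring⟩
  rw [he.neg_pow]

lemma cg2_pp_sigmapp (N : ℕ) : Cg2 (pp N) (rescale (-1 : ℤ) (pp N)) := by
  rw [sigma_pp, pp]
  apply Cg2_prod
  intro k _ i
  rcases Nat.even_or_odd (k+1) with he | ho
  · rw [show (1 + (X:RR)^(k+1)) - (1 + (-(X:RR))^(k+1))
        = (X:RR)^(k+1) - (-(X:RR))^(k+1) by ring, he.neg_pow]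
    simp
  · rw [show (1 + (X:RR)^(k+1)) - (1 + (-(X:RR))^(k+1))
        = (X:RR)^(k+1) - (-(X:RR))^(k+1) by ring, ho.neg_pow,
      show (X:RR)^(k+1) - (-(X:RR)^(k+1)) = 2*(X:RR)^(k+1) by ring, coeff_two_mul]
    exact Dvd.intro _ rfl

lemma ee_mul_pp (N : ℕ) : ee N * pp N = eet N := by
  rw [ee, pp, eet, ← Finset.prod_mul_distrib]
  refine Finset.prod_congr rfl fun k _ => ?_
  rw [show 2*(k+1) = (k+1)*2 by ring, pow_mul]
  ring

lemma Tq_zero : Tq 0 = 0 := by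
  ext n
  rw [coeff_Tq]
  simp

lemma Tq_neg (f : RR) : Tq (-f) = - Tq f := by
  have h : Tq (0 - f) = Tq 0 - Tq f := Tq_sub 0 f
  simpa [Tq_zero] using h

lemma Tq_add (f g : RR) : Tq (f + g) = Tq f + Tq g := by
  have h : Tq (f - (-g)) = Tq f - Tq (-g) := Tq_sub f (-g)
  simpa [Tq_neg] using h

lemma Tq_ee (N : ℕ) : Tq (ee N) = eet N := by
  rw [ee, eet, Tq_prod]
  refine Finset.prod_congr rfl fun k _ => ?_
  rw [Tq_sub, Tq_one, Tq_X_pow]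

lemma Tq_pp (N : ℕ) : Tq (pp N) = ppt N := by
  rw [pp, ppt, Tq_prod]
  refine Finset.prod_congr rfl fun k _ => ?_
  rw [Tq_add, Tq_one, Tq_X_pow]

lemma Tq_two_mul (f : RR) : Tq (2 * f) = 2 * Tq f := by
  ext n
  rw [coeff_Tq, coeff_two_mul, coeff_two_mul, coeff_Tq, mul_ite, mul_zero]

/-- The main finite congruence:
`pp² + ee² ≡ 2·ee·mm (mod 8, X^(2K+2))`. -/
lemma main_finite (K : ℕ) : ∀ i < 2*K+2,
    (8:ℤ) ∣ coeff i (pp (2*K) * pp (2*K) + ee (2*K) * ee (2*K)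
      - 2*(ee (2*K) * mm (2*K))) := by
  intro i hi
  set N := 2*K with hN
  obtain ⟨c, hc⟩ := exists_half (f := ee N - pp N) (cg2_ee_pp N)
  obtain ⟨c'', hc''⟩ := exists_half (f := pp N - rescale (-1 : ℤ) (pp N)) (cg2_pp_sigmapp N)
  obtain ⟨s, hs⟩ := exists_half (f := pp N * pp N - ppt N) (cg2_pp2_ppt N)
  -- t := Tq c;  2 * Tq c = eet N - ppt N
  have ht : 2 * Tq c = eet N - ppt N := by
    rw [← Tq_two_mul, ← hc, Tq_sub, Tq_ee, Tq_pp]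
  -- pp * mm = eet + 2 * (mm * c'')
  have hPM : pp N * mm N = eet N + 2*(mm N * c'') := by
    have h1 : mm N * rescale (-1 : ℤ) (pp N) = eet N := by
      rw [← sigma_ee, ← map_mul, ee_mul_pp, sigma_eet]
    calc pp N * mm N = mm N * rescale (-1 : ℤ) (pp N)
          + mm N * (pp N - rescale (-1 : ℤ) (pp N)) := by ring
      _ = eet N + 2*(mm N * c'') := by rw [h1, hc'']; ring
  -- the exact algebraic identity Δ = 4 W
  have hee : ee N = pp N + 2*c := by linear_combination hc
  have hDelta : pp N * pp N + ee N * ee N - 2*(ee N * mm N)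
      = 4*((s - mm N * c'') + (c*c - Tq c) + c*(pp N - mm N)) := by
    rw [hee]
    linear_combination 2*hs - 2*hPM + 2*ht
  rw [hDelta]
  have h4 : coeff i (4*((s - mm N * c'') + (c*c - Tq c) + c*(pp N - mm N)))
      = 4 * coeff i ((s - mm N * c'') + (c*c - Tq c) + c*(pp N - mm N)) := by
    have h42 : (4:RR) = 2*2 := by norm_num
    rw [h42, mul_assoc, coeff_two_mul, coeff_two_mul]
    ring
  rw [h4, show (8:ℤ) = 4*2 by norm_num]
  apply mul_dvd_mul_left
  rw [map_add, map_add]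
  have hW1 : (2:ℤ) ∣ coeff i (s - mm N * c'') := by
    have hsplit : s - mm N * c'' = (s - pp N * c'') + (pp N - mm N)*c'' := by ring
    rw [hsplit, map_add]
    refine dvd_add ?_ (dvd_coeff_mul_left (cg2_pp_mm N) c'' i)
    -- 2*(s - pp*c'') = pp*σpp - ppt ; coefficients below 2K+2 vanish by euler_key
    have hser : (2:RR)*(s - pp N * c'') = pp N * rescale (-1 : ℤ) (pp N) - ppt N := by
      linear_combination (-1 : RR)*hs + (pp N)*hc''
    have hz : coeff i (pp N * rescale (-1 : ℤ) (pp N) - ppt N) = 0 := by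
      have hd := euler_key K
      exact coeff_eq_zero_of_X_pow_dvd hd (by omega)
    have h2z : (2:ℤ) * coeff i (s - pp N * c'') = 0 := by
      rw [← coeff_two_mul, hser, hz]
    have hz2 : coeff i (s - pp N * c'') = 0 := by omega
    rw [hz2]
    exact dvd_zero 2
  refine dvd_add (dvd_add hW1 (frobenius_coeff c i)) ?_
  exact dvd_coeff_mul_right (cg2_pp_mm N) c i

lemma coeff_F1 {N i : ℕ} (h : i < N) : coeff i (F 1) = coeff i (ee N) := by
  rw [F, coeff_iProd_s9 (fun k => ⟨-1, by rw [one_mul]; ring⟩) h, ee]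
  refine congrArg _ (Finset.prod_congr rfl fun k _ => by rw [one_mul])

lemma coeff_Fneg {N i : ℕ} (h : i < N) : coeff i Fneg = coeff i (pp N) := by
  rw [Fneg, coeff_iProd_s9 (fun k => ⟨1, by rw [mul_one]⟩) h, pp]

lemma coeff_FnegQ {N i : ℕ} (h : i < N) : coeff i FnegQ = coeff i (mm N) := by
  rw [FnegQ, coeff_iProd_s9 (fun k => ⟨-((-1:RR))^(k+1), by rw [neg_pow (X:RR)]; ring⟩) h, mm]

lemma ceq_mul {L : ℕ} {f f' g g' : RR} (hf : ∀ i < L, coeff i f = coeff i f')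
    (hg : ∀ i < L, coeff i g = coeff i g') :
    ∀ i < L, coeff i (f*g) = coeff i (f'*g') := by
  intro i hi
  rw [PowerSeries.coeff_mul, PowerSeries.coeff_mul]
  refine Finset.sum_congr rfl fun p hp => ?_
  rw [Finset.HasAntidiagonal.mem_antidiagonal] at hp
  rw [hf p.1 (by omega), hg p.2 (by omega)]

lemma constCoeff_F1 : constantCoeff (F 1) = 1 := by
  rw [← coeff_zero_eq_constantCoeff_apply]
  rw [coeff_F1 (N := 1) (by norm_num)]
  simp [ee]

lemma hF1inv : F 1 * psInv (F 1) = 1 :=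
  PowerSeries.mul_invOfUnit _ _ (by rw [constCoeff_F1]; rfl)

/-- `∑ a(n) qⁿ ≡ 2(−q;−q)∞ − (q;q)∞ (mod 8)`, coefficientwise. -/
theorem a_congruence_mod_eight (n : ℕ) :
    (8 : ℤ) ∣ (a n - (2 * PowerSeries.coeff n FnegQ - PowerSeries.coeff n (F 1))) := by
  set N := 2*(n+1) with hN
  have hB : ∀ i < n+1,
      (8:ℤ) ∣ coeff i (Fneg*Fneg + F 1*F 1 - 2*(F 1 * FnegQ)) := by
    intro i hi
    have hiN : ∀ j, j < n+1 → j < N := by omega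
    have e1 := ceq_mul (L := n+1) (fun j hj => coeff_Fneg (hiN j hj)) (fun j hj => coeff_Fneg (hiN j hj)) i hi
    have e2 := ceq_mul (L := n+1) (fun j hj => coeff_F1 (hiN j hj)) (fun j hj => coeff_F1 (hiN j hj)) i hi
    have e3 := ceq_mul (L := n+1) (fun j hj => coeff_F1 (hiN j hj)) (fun j hj => coeff_FnegQ (hiN j hj)) i hi
    have hsum : coeff i (Fneg*Fneg + F 1*F 1 - 2*(F 1 * FnegQ))
        = coeff i (pp N * pp N + ee N * ee N - 2*(ee N * mm N)) := by
      rw [map_sub, map_add, map_sub, map_add, coeff_two_mul, coeff_two_mul, e1, e2, e3]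
    rw [hsum]
    exact main_finite (n+1) i (by omega)
  have hA : a n - (2 * coeff n FnegQ - coeff n (F 1))
      = coeff n ((Fneg^2 * psInv (F 1)) - (2*FnegQ - F 1)) := by
    rw [map_sub, map_sub, coeff_two_mul, a]
  have hfact : (Fneg^2 * psInv (F 1)) - (2*FnegQ - F 1)
      = (Fneg*Fneg + F 1*F 1 - 2*(F 1 * FnegQ)) * psInv (F 1) := by
    have h := hF1inv
    rw [sq]
    linear_combination (2*FnegQ - F 1) * h
  rw [hA, hfact, PowerSeries.coeff_mul]
  refine Finset.dvd_sum fun p hp => ?_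
  rw [Finset.HasAntidiagonal.mem_antidiagonal] at hp
  exact (hB p.1 (by omega)).mul_right _
end
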